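/- Let O₁ and O₂ be nonempty sets and O = O₁ × O₂, with preorders ≽₁ on Δ(O₁), ≽₂ on Δ(O₂), and a preorder ≽ on Δ(O). Suppose there are α, β ∈ (0,1) and, for each i ∈ {1,2}, elements aᵢ, bᵢ, cᵢ, dᵢ ∈ Oᵢ with δ_{aᵢ} ≻ᵢ δ_{bᵢ} ≻ᵢ δ_{cᵢ} ≻ᵢ δ_{dᵢ}, such that δ_{a₁} α δ_{d₁} ∼₁ δ_{b₁}, δ_{c₁} ≽₁ δ_{b₁} (β/(β+(1−α))) δ_{d₁}, δ_{a₂} β δ_{d₂} ∼₂ δ_{b₂}, and δ_{c₂} ≽₂ δ_{b₂} (α/(α+(1−β))) δ_{d₂}. Then ≽ cannot simultaneously satisfy Pareto, Converse Pareto, Independence, Unidimensional Dimensional Separability, and Negative Dominance. -/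

import Mathlib

open scoped BigOperators

noncomputable section

/-- A finite-support lottery on `X`. -/
structure Lottery (X : Type*) where
  val : X →₀ ℝ
  nonneg : ∀ x, 0 ≤ val x
  total : val.sum (fun _ p => p) = 1

namespace Lottery

variable {X : Type*}

/-- The point-mass lottery at `x`. -/
def delta (x : X) : Lottery X where
  val := Finsupp.single x 1
  nonneg := fun y => by
    classical
    rw [Finsupp.single_apply]
    split <;> norm_num
  total := by
    rw [Finsupp.sum_single_index rfl]

/-- The mixture `α • f + (1 - α) • g`. -/
def mix (α : ℝ) (h1 : 0 ≤ α) (h2 : α ≤ 1) (f g : Lottery X) : Lottery X where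
  val := α • f.val + (1 - α) • g.val
  nonneg := fun x => by
    have hf := f.nonneg x
    have hg := g.nonneg x
    simp only [Finsupp.coe_add, Finsupp.coe_smul, Pi.add_apply, Pi.smul_apply, smul_eq_mul]
    nlinarith
  total := by
    rw [Finsupp.sum_add_index' (fun _ => rfl) (fun _ _ _ => rfl)]
    rw [Finsupp.sum_smul_index (fun _ => rfl), Finsupp.sum_smul_index (fun _ => rfl)]
    rw [← Finsupp.mul_sum, ← Finsupp.mul_sum, f.total, g.total]
    ring

/-- The uniform lottery on `a` and `b`, written `a/b` in the paper. -/
def unif (a b : X) : Lottery X := mix (1/2) (by norm_num) (by norm_num) (delta a) (delta b)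

/-- Strict preference. -/
def SPref (R : Lottery X → Lottery X → Prop) (f g : Lottery X) : Prop := R f g ∧ ¬ R g f

/-- Indifference. -/
def Indiff (R : Lottery X → Lottery X → Prop) (f g : Lottery X) : Prop := R f g ∧ R g f

/-- Incomparability. -/
def Incomp (R : Lottery X → Lottery X → Prop) (f g : Lottery X) : Prop := ¬ R f g ∧ ¬ R g f

/-- Negative Dominance. -/
def NegDominance (R : Lottery X → Lottery X → Prop) : Prop :=
  ∀ f g : Lottery X, SPref R f g →
    ∃ o ∈ f.val.support, ∃ o' ∈ g.val.support, SPref R (delta o) (delta o')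

/-- Independence. -/
def Independence (R : Lottery X → Lottery X → Prop) : Prop :=
  ∀ f g h : Lottery X, ∀ α : ℝ, ∀ (h1 : 0 < α) (h2 : α < 1),
    (R f g ↔ R (mix α h1.le h2.le f h) (mix α h1.le h2.le g h))

/-- The coordinatewise expectation of a lottery on `ℝ²`. -/
def expLot (f : Lottery (ℝ × ℝ)) : ℝ × ℝ :=
  (f.val.sum fun o p => p * o.1, f.val.sum fun o p => p * o.2)

/-- Pareto. -/
def Pareto (R : Lottery (ℝ × ℝ) → Lottery (ℝ × ℝ) → Prop) : Prop :=
  ∀ x y x' y' : ℝ, x' ≤ x → y' ≤ y → R (delta (x, y)) (delta (x', y'))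

/-- Converse Pareto. -/
def ConvPareto (R : Lottery (ℝ × ℝ) → Lottery (ℝ × ℝ) → Prop) : Prop :=
  ∀ x y x' y' : ℝ, R (delta (x, y)) (delta (x', y')) → x' ≤ x ∧ y' ≤ y

/-- Two outcomes are unidimensional with each other if they differ in at most one coordinate. -/
def UniWith {A B : Type*} (o o' : A × B) : Prop := o.1 = o'.1 ∨ o.2 = o'.2

/-- A lottery is unidimensional if any two outcomes in its support are unidimensional
with each other. -/
def Unidim {A B : Type*} (f : Lottery (A × B)) : Prop :=
  ∀ o ∈ f.val.support, ∀ o' ∈ f.val.support, UniWith o o'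

/-- Expectationalism. -/
def Expectationalism (R : Lottery (ℝ × ℝ) → Lottery (ℝ × ℝ) → Prop) : Prop :=
  ∀ f, Indiff R f (delta (expLot f))

/-- Unidimensional Expectations. -/
def UnidimExp (R : Lottery (ℝ × ℝ) → Lottery (ℝ × ℝ) → Prop) : Prop :=
  ∀ f, Unidim f → Indiff R f (delta (expLot f))

end Lottery

open Lottery

/-- Qualitative Pareto. -/
def QPareto {O₁ O₂ : Type*} (R1 : Lottery O₁ → Lottery O₁ → Prop)
    (R2 : Lottery O₂ → Lottery O₂ → Prop)
    (R : Lottery (O₁ × O₂) → Lottery (O₁ × O₂) → Prop) : Prop :=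
  ∀ o₁ o₁' : O₁, ∀ o₂ o₂' : O₂,
    R1 (delta o₁) (delta o₁') → R2 (delta o₂) (delta o₂') →
      R (delta (o₁, o₂)) (delta (o₁', o₂'))

/-- Qualitative Converse Pareto. -/
def QConvPareto {O₁ O₂ : Type*} (R1 : Lottery O₁ → Lottery O₁ → Prop)
    (R2 : Lottery O₂ → Lottery O₂ → Prop)
    (R : Lottery (O₁ × O₂) → Lottery (O₁ × O₂) → Prop) : Prop :=
  ∀ o₁ o₁' : O₁, ∀ o₂ o₂' : O₂,
    R (delta (o₁, o₂)) (delta (o₁', o₂')) →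
      R1 (delta o₁) (delta o₁') ∧ R2 (delta o₂) (delta o₂')

/-- The embedding `o₁ ↦ (o₁, o₂)`. -/
def fixSnd {O₁ O₂ : Type*} (o₂ : O₂) : O₁ ↪ O₁ × O₂ :=
  ⟨fun o₁ => (o₁, o₂), fun a b h => by simpa using congrArg Prod.fst h⟩

/-- The embedding `o₂ ↦ (o₁, o₂)`. -/
def fixFst {O₁ O₂ : Type*} (o₁ : O₁) : O₂ ↪ O₁ × O₂ :=
  ⟨fun o₂ => (o₁, o₂), fun a b h => by simpa using congrArg Prod.snd h⟩

/-- The lottery `(f₁, o₂)` on `O₁ × O₂` obtained from a lottery on `O₁`. -/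
noncomputable def embed1 {O₁ O₂ : Type*} (f : Lottery O₁) (o₂ : O₂) : Lottery (O₁ × O₂) where
  val := f.val.embDomain (fixSnd o₂)
  nonneg := fun x => by
    rcases em (x ∈ Set.range (fixSnd (O₁ := O₁) o₂)) with ⟨a, rfl⟩ | hx
    · rw [Finsupp.embDomain_apply_self]; exact f.nonneg a
    · rw [Finsupp.embDomain_of_notMem_range _ _ _ hx]
  total := by
    rw [Finsupp.sum_embDomain]
    exact f.total

/-- The lottery `(f₂, o₁)` on `O₁ × O₂` obtained from a lottery on `O₂`. -/
noncomputable def embed2 {O₁ O₂ : Type*} (f : Lottery O₂) (o₁ : O₁) : Lottery (O₁ × O₂) where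
  val := f.val.embDomain (fixFst o₁)
  nonneg := fun x => by
    rcases em (x ∈ Set.range (fixFst (O₂ := O₂) o₁)) with ⟨a, rfl⟩ | hx
    · rw [Finsupp.embDomain_apply_self]; exact f.nonneg a
    · rw [Finsupp.embDomain_of_notMem_range _ _ _ hx]
  total := by
    rw [Finsupp.sum_embDomain]
    exact f.total

/-- Unidimensional Dimensional Separability. -/
def UnidimDimSep {O₁ O₂ : Type*} (R1 : Lottery O₁ → Lottery O₁ → Prop)
    (R2 : Lottery O₂ → Lottery O₂ → Prop)
    (R : Lottery (O₁ × O₂) → Lottery (O₁ × O₂) → Prop) : Prop :=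
  (∀ f₁ g₁ : Lottery O₁, R1 f₁ g₁ ↔ ∀ o₂ : O₂, R (embed1 f₁ o₂) (embed1 g₁ o₂)) ∧
  (∀ f₂ g₂ : Lottery O₂, R2 f₂ g₂ ↔ ∀ o₁ : O₁, R (embed2 f₂ o₁) (embed2 g₂ o₁))


section NegDomAuxiliary

variable {Y : Type*}

theorem Lottery.ext' {f g : Lottery Y} (h : f.val = g.val) : f = g := by
  cases f; cases g; simpa using h

lemma Lottery.mix_val (μ : ℝ) (h0 : 0 ≤ μ) (h1 : μ ≤ 1) (f g : Lottery Y) :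
    (mix μ h0 h1 f g).val = μ • f.val + (1 - μ) • g.val := rfl

lemma Lottery.delta_val (x : Y) : (delta x).val = Finsupp.single x 1 := rfl

lemma Lottery.mix_comm' (μ : ℝ) (h0 : 0 ≤ μ) (h1 : μ ≤ 1) (h0' : (0:ℝ) ≤ 1 - μ)
    (h1' : 1 - μ ≤ 1) (f g : Lottery Y) :
    mix μ h0 h1 f g = mix (1 - μ) h0' h1' g f := by
  apply Lottery.ext'
  ext o
  simp only [Lottery.mix_val, Finsupp.add_apply, Finsupp.smul_apply, smul_eq_mul]
  ring

lemma Lottery.mix_self (μ : ℝ) (h0 : 0 ≤ μ) (h1 : μ ≤ 1) (f : Lottery Y) :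
    mix μ h0 h1 f f = f := by
  apply Lottery.ext'
  ext o
  simp only [Lottery.mix_val, Finsupp.add_apply, Finsupp.smul_apply, smul_eq_mul]
  ring

lemma Lottery.mix_zero' (h0 : (0:ℝ) ≤ 0) (h1 : (0:ℝ) ≤ 1) (f g : Lottery Y) :
    mix 0 h0 h1 f g = g := by
  apply Lottery.ext'
  ext o
  simp only [Lottery.mix_val, Finsupp.add_apply, Finsupp.smul_apply, smul_eq_mul]
  ring

lemma Lottery.mix_one' (h0 : (0:ℝ) ≤ 1) (h1 : (1:ℝ) ≤ 1) (f g : Lottery Y) :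
    mix 1 h0 h1 f g = f := by
  apply Lottery.ext'
  ext o
  simp only [Lottery.mix_val, Finsupp.add_apply, Finsupp.smul_apply, smul_eq_mul]
  ring

lemma Lottery.repl {R : Lottery Y → Lottery Y → Prop} (hr : Reflexive R)
    (hInd : Independence R) {f g : Lottery Y} (hfg : R f g)
    (μ : ℝ) (h0 : 0 ≤ μ) (h1 : μ ≤ 1) (h : Lottery Y) :
    R (mix μ h0 h1 f h) (mix μ h0 h1 g h) := by
  rcases eq_or_lt_of_le h0 with hz | hz
  · have hz' : μ = 0 := hz.symm
    subst hz'
    rw [Lottery.mix_zero', Lottery.mix_zero']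
    exact hr h
  · rcases eq_or_lt_of_le h1 with ho | ho
    · subst ho
      rw [Lottery.mix_one', Lottery.mix_one']
      exact hfg
    · exact (hInd f g h μ hz ho).mp hfg

lemma embDomain_smul_real {Z W : Type*} (e : Z ↪ W) (c : ℝ) (v : Z →₀ ℝ) :
    Finsupp.embDomain e (c • v) = c • Finsupp.embDomain e v := by
  ext w
  by_cases hw : w ∈ Set.range e
  · obtain ⟨z, rfl⟩ := hw
    rw [Finsupp.smul_apply, Finsupp.embDomain_apply_self, Finsupp.embDomain_apply_self,
      Finsupp.smul_apply]
  · rw [Finsupp.embDomain_notin_range _ _ _ hw, Finsupp.smul_apply,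
      Finsupp.embDomain_notin_range _ _ _ hw, smul_zero]

lemma embed1_delta {O₁ O₂ : Type*} (x : O₁) (y : O₂) : embed1 (delta x) y = delta (x, y) := by
  apply Lottery.ext'
  show Finsupp.embDomain (fixSnd y) (Finsupp.single x 1) = Finsupp.single (x, y) 1
  rw [Finsupp.embDomain_single]
  rfl

lemma embed2_delta {O₁ O₂ : Type*} (y : O₂) (x : O₁) : embed2 (delta y) x = delta (x, y) := by
  apply Lottery.ext'
  show Finsupp.embDomain (fixFst x) (Finsupp.single y 1) = Finsupp.single (x, y) 1
  rw [Finsupp.embDomain_single]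
  rfl

lemma embed1_mix {O₁ O₂ : Type*} (μ : ℝ) (h0 : 0 ≤ μ) (h1 : μ ≤ 1) (f g : Lottery O₁)
    (y : O₂) : embed1 (mix μ h0 h1 f g) y = mix μ h0 h1 (embed1 f y) (embed1 g y) := by
  apply Lottery.ext'
  show Finsupp.embDomain (fixSnd y) (μ • f.val + (1 - μ) • g.val)
    = μ • Finsupp.embDomain (fixSnd y) f.val + (1 - μ) • Finsupp.embDomain (fixSnd y) g.val
  rw [Finsupp.embDomain_add, embDomain_smul_real, embDomain_smul_real]

lemma embed2_mix {O₁ O₂ : Type*} (μ : ℝ) (h0 : 0 ≤ μ) (h1 : μ ≤ 1) (f g : Lottery O₂)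
    (x : O₁) : embed2 (mix μ h0 h1 f g) x = mix μ h0 h1 (embed2 f x) (embed2 g x) := by
  apply Lottery.ext'
  show Finsupp.embDomain (fixFst x) (μ • f.val + (1 - μ) • g.val)
    = μ • Finsupp.embDomain (fixFst x) f.val + (1 - μ) • Finsupp.embDomain (fixFst x) g.val
  rw [Finsupp.embDomain_add, embDomain_smul_real, embDomain_smul_real]

set_option maxHeartbeats 2000000 in
theorem negdom_aux {OO : Type*} (R : Lottery OO → Lottery OO → Prop)
    (hr : Reflexive R) (ht : Transitive R) (hInd : Independence R) (hND : NegDominance R)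
    (α β : ℝ) (hα0 : 0 < α) (hα1 : α < 1) (hβ0 : 0 < β) (hβ1 : β < 1) (hαβ : α ≤ β)
    (AA AB AD BA DA AC CA BD BB : OO)
    (L1 : R (delta AC) (mix (α / (α + (1 - β))) (div_nonneg hα0.le (by linarith))
      (by rw [div_le_one (by linarith)]; linarith) (delta AB) (delta AD)))
    (L2 : R (delta CA) (mix (β / (β + (1 - α))) (div_nonneg hβ0.le (by linarith))
      (by rw [div_le_one (by linarith)]; linarith) (delta BA) (delta DA)))
    (L3 : Indiff R (mix β hβ0.le hβ1.le (delta AA) (delta AD)) (delta AB))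
    (L4 : Indiff R (mix α hα0.le hα1.le (delta AA) (delta DA)) (delta BA))
    (L5 : R (delta AD) (delta BD))
    (L6 : R (mix β hβ0.le hβ1.le (delta BA) (delta BD)) (delta BB))
    (L7 : R (delta BA) (delta BB))
    (hc1 : ¬ R (delta AC) (delta BB))
    (hc2 : ¬ R (delta CA) (delta BB))
    (hc3 : ¬ R (delta BD) (delta AD)) : False := by
  classical
  have hu : (0:ℝ) < 1 - α := by linarith
  have hv : (0:ℝ) < 1 - β := by linarith
  have hαv : (0:ℝ) < α + (1 - β) := by linarith
  have hβu : (0:ℝ) < β + (1 - α) := by linarith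
  have hD : (0:ℝ) < 1 + α + β * β - α * β := by nlinarith
  have hD2 : (0:ℝ) < 1 + β * β - α * β := by nlinarith
  have hE4 : (0:ℝ) < (1 - β) * (1 + α) + β * β := by nlinarith
  have hp0 : (0:ℝ) ≤ (α + (1 - β)) / (1 + α + β * β - α * β) := div_nonneg hαv.le hD.le
  have hp1 : (α + (1 - β)) / (1 + α + β * β - α * β) ≤ 1 := by
    rw [div_le_one hD]; nlinarith
  have hq0 : (0:ℝ) ≤ 1 - (α + (1 - β)) / (1 + α + β * β - α * β) := by linarith
  have hq1 : 1 - (α + (1 - β)) / (1 + α + β * β - α * β) ≤ 1 := by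
    have : (0:ℝ) ≤ (α + (1 - β)) / (1 + α + β * β - α * β) := hp0
    linarith
  have ht0 : (0:ℝ) ≤ α / (α + (1 - β)) := div_nonneg hα0.le hαv.le
  have ht1 : α / (α + (1 - β)) ≤ 1 := by rw [div_le_one hαv]; linarith
  have hs0 : (0:ℝ) ≤ β / (β + (1 - α)) := div_nonneg hβ0.le hβu.le
  have hs1 : β / (β + (1 - α)) ≤ 1 := by rw [div_le_one hβu]; linarith
  have hc30 : (0:ℝ) ≤ (1 - β) / (1 + β * β - α * β) := div_nonneg hv.le hD2.le
  have hc31 : (1 - β) / (1 + β * β - α * β) ≤ 1 := by rw [div_le_one hD2]; nlinarith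
  have hpt0 : (0:ℝ) ≤ α / (1 + α + β * β - α * β) := div_nonneg hα0.le hD.le
  have hpt1 : α / (1 + α + β * β - α * β) ≤ 1 := by rw [div_le_one hD]; nlinarith
  have hw40 : (0:ℝ) ≤ β / (1 + α + β * β - α * β) := div_nonneg hβ0.le hD.le
  have hw41 : β / (1 + α + β * β - α * β) ≤ 1 := by rw [div_le_one hD]; nlinarith
  have he0 : (0:ℝ) ≤ (1 - β) * (1 + α) / ((1 - β) * (1 + α) + β * β) :=
    div_nonneg (by nlinarith) hE4.le
  have he1 : (1 - β) * (1 + α) / ((1 - β) * (1 + α) + β * β) ≤ 1 := by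
    rw [div_le_one hE4]; nlinarith
  have hm0 : (0:ℝ) < (1 - β) * (1 + α) / (1 + α + β * β - α * β) :=
    div_pos (by nlinarith) hD
  have hm1 : (1 - β) * (1 + α) / (1 + α + β * β - α * β) < 1 := by
    rw [div_lt_one hD]; nlinarith
  have hw60 : (0:ℝ) ≤ (1 + α) / (1 + α + β * β - α * β) := div_nonneg (by linarith) hD.le
  have hw61 : (1 + α) / (1 + α + β * β - α * β) ≤ 1 := by
    rw [div_le_one hD]; nlinarith [mul_nonneg hβ0.le (sub_nonneg.mpr hαβ)]
  have hw60' : (0:ℝ) ≤ 1 - (1 + α) / (1 + α + β * β - α * β) := by linarith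
  have hw61' : 1 - (1 + α) / (1 + α + β * β - α * β) ≤ 1 := by
    have : (0:ℝ) ≤ (1 + α) / (1 + α + β * β - α * β) := hw60
    linarith
  set K1 : Lottery OO := mix (α / (α + (1 - β))) ht0 ht1 (delta AB) (delta AD) with hK1
  set K2 : Lottery OO := mix (β / (β + (1 - α))) hs0 hs1 (delta BA) (delta DA) with hK2
  set XX : Lottery OO := mix ((α + (1 - β)) / (1 + α + β * β - α * β)) hp0 hp1
    (delta AC) (delta CA) with hXX
  set W1 : Lottery OO := mix ((α + (1 - β)) / (1 + α + β * β - α * β)) hp0 hp1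
    K1 (delta CA) with hW1
  set W2 : Lottery OO := mix (1 - (α + (1 - β)) / (1 + α + β * β - α * β)) hq0 hq1
    K2 K1 with hW2
  set C3 : Lottery OO := mix ((1 - β) / (1 + β * β - α * β)) hc30 hc31
    (delta AD) K2 with hC3
  set W3 : Lottery OO := mix (α / (1 + α + β * β - α * β)) hpt0 hpt1
    (mix β hβ0.le hβ1.le (delta AA) (delta AD)) C3 with hW3
  set C4 : Lottery OO := mix ((1 - β) * (1 + α) / ((1 - β) * (1 + α) + β * β)) he0 he1
    (delta AD) (delta BA) with hC4
  set W4 : Lottery OO := mix (β / (1 + α + β * β - α * β)) hw40 hw41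
    (delta BA) C4 with hW4
  set W5 : Lottery OO := mix ((1 - β) * (1 + α) / (1 + α + β * β - α * β)) hm0.le hm1.le
    (delta BD) (delta BA) with hW5
  set W6 : Lottery OO := mix ((1 + α) / (1 + α + β * β - α * β)) hw60 hw61
    (delta BB) (delta BA) with hW6
  have E1 : W1 = mix (1 - (α + (1 - β)) / (1 + α + β * β - α * β)) hq0 hq1 (delta CA) K1 :=
    Lottery.mix_comm' _ hp0 hp1 hq0 hq1 K1 (delta CA)
  have E2 : W2 = mix (α / (1 + α + β * β - α * β)) hpt0 hpt1 (delta AB) C3 := by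
    apply Lottery.ext'
    simp only [hW2, hC3, hK2, hK1]
    ext o
    simp only [Lottery.mix_val, Lottery.delta_val, Finsupp.add_apply, Finsupp.smul_apply,
      smul_eq_mul, Finsupp.single_apply]
    set x1 := (if AA = o then (1:ℝ) else 0) with hx1
    set x2 := (if AB = o then (1:ℝ) else 0) with hx2
    set x3 := (if AD = o then (1:ℝ) else 0) with hx3
    set x4 := (if BA = o then (1:ℝ) else 0) with hx4
    set x5 := (if DA = o then (1:ℝ) else 0) with hx5
    set x6 := (if BD = o then (1:ℝ) else 0) with hx6
    set x7 := (if BB = o then (1:ℝ) else 0) with hx7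
    field_simp [show (1 + α + β ^ 2 - α * β) ≠ 0 by rw [sq]; exact hD.ne',
      show (1 + β ^ 2 - α * β) ≠ 0 by rw [sq]; exact hD2.ne',
      show (1 - β) * (1 + α) + β ^ 2 ≠ 0 by rw [sq]; exact hE4.ne', hαv.ne', hβu.ne']
    ring
  have E3 : W3 = mix (β / (1 + α + β * β - α * β)) hw40 hw41
      (mix α hα0.le hα1.le (delta AA) (delta DA)) C4 := by
    apply Lottery.ext'
    simp only [hW3, hC3, hC4, hK2]
    ext o
    simp only [Lottery.mix_val, Lottery.delta_val, Finsupp.add_apply, Finsupp.smul_apply,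
      smul_eq_mul, Finsupp.single_apply]
    set x1 := (if AA = o then (1:ℝ) else 0) with hx1
    set x2 := (if AB = o then (1:ℝ) else 0) with hx2
    set x3 := (if AD = o then (1:ℝ) else 0) with hx3
    set x4 := (if BA = o then (1:ℝ) else 0) with hx4
    set x5 := (if DA = o then (1:ℝ) else 0) with hx5
    set x6 := (if BD = o then (1:ℝ) else 0) with hx6
    set x7 := (if BB = o then (1:ℝ) else 0) with hx7
    field_simp [show (1 + α + β ^ 2 - α * β) ≠ 0 by rw [sq]; exact hD.ne',
      show (1 + β ^ 2 - α * β) ≠ 0 by rw [sq]; exact hD2.ne',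
      show (1 - β) * (1 + α) + β ^ 2 ≠ 0 by rw [sq]; exact hE4.ne', hαv.ne', hβu.ne']
    ring
  have E4 : W4 = mix ((1 - β) * (1 + α) / (1 + α + β * β - α * β)) hm0.le hm1.le
      (delta AD) (delta BA) := by
    apply Lottery.ext'
    simp only [hW4, hC4]
    ext o
    simp only [Lottery.mix_val, Lottery.delta_val, Finsupp.add_apply, Finsupp.smul_apply,
      smul_eq_mul, Finsupp.single_apply]
    set x1 := (if AA = o then (1:ℝ) else 0) with hx1
    set x2 := (if AB = o then (1:ℝ) else 0) with hx2
    set x3 := (if AD = o then (1:ℝ) else 0) with hx3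
    set x4 := (if BA = o then (1:ℝ) else 0) with hx4
    set x5 := (if DA = o then (1:ℝ) else 0) with hx5
    set x6 := (if BD = o then (1:ℝ) else 0) with hx6
    set x7 := (if BB = o then (1:ℝ) else 0) with hx7
    field_simp [show (1 + α + β ^ 2 - α * β) ≠ 0 by rw [sq]; exact hD.ne',
      show (1 + β ^ 2 - α * β) ≠ 0 by rw [sq]; exact hD2.ne',
      show (1 - β) * (1 + α) + β ^ 2 ≠ 0 by rw [sq]; exact hE4.ne', hαv.ne', hβu.ne',
      show (1 + α + β ^ 2 - β * α) ≠ 0 by intro h; nlinarith]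
    ring
  have E5 : W5 = mix ((1 + α) / (1 + α + β * β - α * β)) hw60 hw61
      (mix β hβ0.le hβ1.le (delta BA) (delta BD)) (delta BA) := by
    apply Lottery.ext'
    simp only [hW5]
    ext o
    simp only [Lottery.mix_val, Lottery.delta_val, Finsupp.add_apply, Finsupp.smul_apply,
      smul_eq_mul, Finsupp.single_apply]
    set x1 := (if AA = o then (1:ℝ) else 0) with hx1
    set x2 := (if AB = o then (1:ℝ) else 0) with hx2
    set x3 := (if AD = o then (1:ℝ) else 0) with hx3
    set x4 := (if BA = o then (1:ℝ) else 0) with hx4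
    set x5 := (if DA = o then (1:ℝ) else 0) with hx5
    set x6 := (if BD = o then (1:ℝ) else 0) with hx6
    set x7 := (if BB = o then (1:ℝ) else 0) with hx7
    field_simp [show (1 + α + β ^ 2 - α * β) ≠ 0 by rw [sq]; exact hD.ne',
      show (1 + β ^ 2 - α * β) ≠ 0 by rw [sq]; exact hD2.ne',
      show (1 - β) * (1 + α) + β ^ 2 ≠ 0 by rw [sq]; exact hE4.ne', hαv.ne', hβu.ne']
    ring
  have S1 : R XX W1 := Lottery.repl hr hInd L1 _ hp0 hp1 (delta CA)
  have S2 : R W1 W2 := by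
    rw [E1]
    exact Lottery.repl hr hInd L2 _ hq0 hq1 K1
  have S3 : R W2 W3 := by
    rw [E2]
    exact Lottery.repl hr hInd L3.2 _ hpt0 hpt1 C3
  have S4 : R W3 W4 := by
    rw [E3]
    exact Lottery.repl hr hInd L4.1 _ hw40 hw41 C4
  have S5 : R W4 W5 := by
    rw [E4]
    exact Lottery.repl hr hInd L5 _ hm0.le hm1.le (delta BA)
  have S6 : R W5 W6 := by
    rw [E5]
    exact Lottery.repl hr hInd L6 _ hw60 hw61 (delta BA)
  have S7 : R W6 (delta BB) := by
    have e : W6 = mix (1 - (1 + α) / (1 + α + β * β - α * β)) hw60' hw61'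
        (delta BA) (delta BB) :=
      Lottery.mix_comm' _ hw60 hw61 hw60' hw61' (delta BB) (delta BA)
    rw [e]
    have h := Lottery.repl hr hInd L7 _ hw60' hw61' (delta BB)
    rwa [Lottery.mix_self] at h
  have hXBB : R XX (delta BB) := ht S1 (ht S2 (ht S3 (ht S4 (ht S5 (ht S6 S7)))))
  have hnot : ¬ R (delta BB) XX := by
    intro hcon
    have h54 : R W5 W4 := ht S6 (ht S7 (ht hcon (ht S1 (ht S2 (ht S3 S4)))))
    rw [E4] at h54
    exact hc3 ((hInd (delta BD) (delta AD) (delta BA) _ hm0 hm1).mpr h54)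
  obtain ⟨o, ho, o', ho', hso⟩ := hND XX (delta BB) ⟨hXBB, hnot⟩
  have hBB : o' = BB := by
    have h : o' ∈ ({BB} : Finset OO) := Finsupp.support_single_subset ho'
    simpa using h
  subst hBB
  have hor : o = AC ∨ o = CA := by
    by_contra hcon
    push_neg at hcon
    have h1 : AC ≠ o := fun h => hcon.1 h.symm
    have h2 : CA ≠ o := fun h => hcon.2 h.symm
    refine Finsupp.mem_support_iff.mp ho ?_
    show XX.val o = 0
    simp only [hXX, Lottery.mix_val, Lottery.delta_val, Finsupp.add_apply,
      Finsupp.smul_apply, smul_eq_mul, Finsupp.single_apply, if_neg h1, if_neg h2]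
    ring
  rcases hor with rfl | rfl
  · exact hc1 hso.1
  · exact hc2 hso.1

end NegDomAuxiliary



/-- qualitative inconsistency of Pareto, Converse Pareto, Independence,
Unidimensional Dimensional Separability, and Negative Dominance, with mixture weights
`α, β ∈ (0,1)`. -/
theorem statement17 {O₁ O₂ : Type*} [Nonempty O₁] [Nonempty O₂]
    (R1 : Lottery O₁ → Lottery O₁ → Prop) (R2 : Lottery O₂ → Lottery O₂ → Prop)
    (R : Lottery (O₁ × O₂) → Lottery (O₁ × O₂) → Prop)
    (h1r : Reflexive R1) (h1t : Transitive R1)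
    (h2r : Reflexive R2) (h2t : Transitive R2)
    (hr : Reflexive R) (ht : Transitive R)
    (α β : ℝ) (hα0 : 0 < α) (hα1 : α < 1) (hβ0 : 0 < β) (hβ1 : β < 1)
    (hex1 : ∃ a b c d : O₁, SPref R1 (delta a) (delta b) ∧ SPref R1 (delta b) (delta c) ∧
      SPref R1 (delta c) (delta d) ∧
      Indiff R1 (mix α hα0.le hα1.le (delta a) (delta d)) (delta b) ∧
      R1 (delta c) (mix (β / (β + (1 - α)))
        (div_nonneg hβ0.le (by linarith)) (by rw [div_le_one (by linarith)]; linarith)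
        (delta b) (delta d)))
    (hex2 : ∃ a b c d : O₂, SPref R2 (delta a) (delta b) ∧ SPref R2 (delta b) (delta c) ∧
      SPref R2 (delta c) (delta d) ∧
      Indiff R2 (mix β hβ0.le hβ1.le (delta a) (delta d)) (delta b) ∧
      R2 (delta c) (mix (α / (α + (1 - β)))
        (div_nonneg hα0.le (by linarith)) (by rw [div_le_one (by linarith)]; linarith)
        (delta b) (delta d))) :
    ¬ (QPareto R1 R2 R ∧ QConvPareto R1 R2 R ∧ Independence R ∧
        UnidimDimSep R1 R2 R ∧ NegDominance R) := by
  rintro ⟨hQP, hQCP, hInd, hSep, hND⟩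
  obtain ⟨a₁, b₁, c₁, d₁, hab1, hbc1, hcd1, hF1, hF3⟩ := hex1
  obtain ⟨a₂, b₂, c₂, d₂, hab2, hbc2, hcd2, hF2, hF4⟩ := hex2
  have F1L : ∀ y : O₂, Indiff R (mix α hα0.le hα1.le (delta (a₁, y)) (delta (d₁, y)))
      (delta (b₁, y)) := by
    intro y
    have h1 := (hSep.1 _ _).mp hF1.1 y
    have h2 := (hSep.1 _ _).mp hF1.2 y
    rw [embed1_mix, embed1_delta, embed1_delta, embed1_delta] at h1 h2
    exact ⟨h1, h2⟩
  have F2L : ∀ x : O₁, Indiff R (mix β hβ0.le hβ1.le (delta (x, a₂)) (delta (x, d₂)))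
      (delta (x, b₂)) := by
    intro x
    have h1 := (hSep.2 _ _).mp hF2.1 x
    have h2 := (hSep.2 _ _).mp hF2.2 x
    rw [embed2_mix, embed2_delta, embed2_delta, embed2_delta] at h1 h2
    exact ⟨h1, h2⟩
  have F3L : ∀ y : O₂, R (delta (c₁, y)) (mix (β / (β + (1 - α)))
      (div_nonneg hβ0.le (by linarith)) (by rw [div_le_one (by linarith)]; linarith)
      (delta (b₁, y)) (delta (d₁, y))) := by
    intro y
    have h1 := (hSep.1 _ _).mp hF3 y
    rw [embed1_mix, embed1_delta, embed1_delta, embed1_delta] at h1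
    exact h1
  have F4L : ∀ x : O₁, R (delta (x, c₂)) (mix (α / (α + (1 - β)))
      (div_nonneg hα0.le (by linarith)) (by rw [div_le_one (by linarith)]; linarith)
      (delta (x, b₂)) (delta (x, d₂))) := by
    intro x
    have h1 := (hSep.2 _ _).mp hF4 x
    rw [embed2_mix, embed2_delta, embed2_delta, embed2_delta] at h1
    exact h1
  rcases le_total α β with hle | hle
  · exact negdom_aux R hr ht hInd hND α β hα0 hα1 hβ0 hβ1 hle
      (a₁, a₂) (a₁, b₂) (a₁, d₂) (b₁, a₂) (d₁, a₂) (a₁, c₂) (c₁, a₂) (b₁, d₂) (b₁, b₂)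
      (F4L a₁) (F3L a₂) (F2L a₁) (F1L a₂)
      (hQP a₁ b₁ d₂ d₂ hab1.1 (h2r _)) (F2L b₁).1 (hQP b₁ b₁ a₂ b₂ (h1r _) hab2.1)
      (fun hcon => hbc2.2 (hQCP _ _ _ _ hcon).2)
      (fun hcon => hbc1.2 (hQCP _ _ _ _ hcon).1)
      (fun hcon => hab1.2 (hQCP _ _ _ _ hcon).1)
  · exact negdom_aux R hr ht hInd hND β α hβ0 hβ1 hα0 hα1 hle
      (a₁, a₂) (b₁, a₂) (d₁, a₂) (a₁, b₂) (a₁, d₂) (c₁, a₂) (a₁, c₂) (d₁, b₂) (b₁, b₂)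
      (F3L a₂) (F4L a₁) (F1L a₂) (F2L a₁)
      (hQP d₁ d₁ a₂ b₂ (h1r _) hab2.1) (F1L b₂).1 (hQP a₁ b₁ b₂ b₂ hab1.1 (h2r _))
      (fun hcon => hbc1.2 (hQCP _ _ _ _ hcon).1)
      (fun hcon => hbc2.2 (hQCP _ _ _ _ hcon).2)
      (fun hcon => hab2.2 (hQCP _ _ _ _ hcon).2)
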